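/- For 1 < p < ∞ with conjugate exponent q = p/(p-1), fixed m < M and x₃ ∈ (m, M], the function s(a) = |(a - q(M-x₃)|a|^p)/(a - q(M-m)|a|^p)|^p · (a - pq(M-m)|a|^p)/(a - pq(M-x₃)|a|^p) is strictly decreasing from 1 to 0 on the interval (0, (1/(pq(M-m)))^{q-1}), so for each σ ∈ (0,1) the equation s(a) = σ has a unique solution there. -/

import Mathlib

open Filter Set Topology


noncomputable def gfun (p c d : ℝ) : ℝ → ℝ :=
  fun t => |(1 - d*t)/(1 - c*t)| ^ p * ((1 - p*c*t)/(1 - p*d*t))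

lemma gfun_contAt (p c d t : ℝ) (hp : 0 < p) (hv : 1 - c*t ≠ 0) (hw2 : 1 - p*d*t ≠ 0) :
    ContinuousAt (gfun p c d) t := by
  unfold gfun
  have h1 : ContinuousAt (fun x : ℝ => (1 - d*x)/(1 - c*x)) t :=
    ContinuousAt.div (by fun_prop) (by fun_prop) hv
  have h2 : ContinuousAt (fun x : ℝ => (1 - p*c*x)/(1 - p*d*x)) t :=
    ContinuousAt.div (by fun_prop) (by fun_prop) hw2
  exact ((h1.abs).rpow_const (Or.inr hp.le)).mul h2

lemma pos_facts (p c d t : ℝ) (hp : 1 < p) (hc : 0 < c) (hd0 : 0 ≤ d) (hdc : d < c)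
    (ht0 : 0 < t) (ht1 : t < 1/(p*c)) :
    0 < 1 - p*c*t ∧ 0 < 1 - c*t ∧ 0 < 1 - d*t ∧ 0 < 1 - p*d*t := by
  have hp0 : (0:ℝ) < p := by linarith
  have hpc : 0 < p*c := by positivity
  have h1 : p*c*t < 1 := by
    have := (lt_div_iff₀ hpc).mp ht1
    nlinarith
  have hw1 : 0 < 1 - p*c*t := by linarith
  have hv : 0 < 1 - c*t := by nlinarith [mul_pos (mul_pos (sub_pos.mpr hp) hc) ht0]
  have hu : 0 < 1 - d*t := by nlinarith [mul_pos (sub_pos.mpr hdc) ht0]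
  have hw2 : 0 < 1 - p*d*t := by nlinarith [mul_pos (mul_pos hp0 (sub_pos.mpr hdc)) ht0]
  exact ⟨hw1, hv, hu, hw2⟩

lemma gfun_anti (p c d : ℝ) (hp : 1 < p) (hc : 0 < c) (hd0 : 0 ≤ d) (hdc : d < c) :
    StrictAntiOn (gfun p c d) (Set.Ioo 0 (1/(p*c))) := by
  have hp0 : (0:ℝ) < p := by linarith
  have hp1' : 0 < p - 1 := sub_pos.mpr hp
  apply strictAntiOn_of_deriv_neg (convex_Ioo _ _)
  · intro t ht
    obtain ⟨hw1, hv, hu, hw2⟩ := pos_facts p c d t hp hc hd0 hdc ht.1 ht.2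
    exact (gfun_contAt p c d t hp0 hv.ne' hw2.ne').continuousWithinAt
  · intro t ht
    rw [interior_Ioo] at ht
    obtain ⟨ht0, ht1⟩ := ht
    obtain ⟨hw1, hv, hu, hw2⟩ := pos_facts p c d t hp hc hd0 hdc ht0 ht1
    have hr : 0 < (1 - d*t)/(1 - c*t) := div_pos hu hv
    -- derivatives of the pieces
    have hDu : HasDerivAt (fun x : ℝ => 1 - d*x) (-d) t := by
      simpa using ((hasDerivAt_id t).const_mul d).const_sub 1
    have hDv : HasDerivAt (fun x : ℝ => 1 - c*x) (-c) t := by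
      simpa using ((hasDerivAt_id t).const_mul c).const_sub 1
    have hDw1 : HasDerivAt (fun x : ℝ => 1 - p*c*x) (-(p*c)) t := by
      simpa using ((hasDerivAt_id t).const_mul (p*c)).const_sub 1
    have hDw2 : HasDerivAt (fun x : ℝ => 1 - p*d*x) (-(p*d)) t := by
      simpa using ((hasDerivAt_id t).const_mul (p*d)).const_sub 1
    have hDr := hDu.div hDv hv.ne'
    have hDrp := (Real.hasDerivAt_rpow_const (x := (1 - d*t)/(1 - c*t)) (p := p)
      (Or.inl hr.ne')).comp t hDr
    have hDw := hDw1.div hDw2 hw2.ne'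
    have hD := hDrp.mul hDw
    simp only [Function.comp] at hD
    have hev : gfun p c d =ᶠ[𝓝 t]
        (fun x => ((1 - d*x)/(1 - c*x)) ^ p * ((1 - p*c*x)/(1 - p*d*x))) := by
      have hcont : ContinuousAt (fun x : ℝ => (1 - d*x)/(1 - c*x)) t :=
        ContinuousAt.div (by fun_prop) (by fun_prop) hv.ne'
      filter_upwards [hcont (lt_mem_nhds hr)] with x hx
      unfold gfun
      rw [abs_of_pos hx]
    have hD' := hD.congr_of_eventuallyEq hev
    rw [hD'.deriv]
    -- now show the derivative expression is negative
    have hre : ((1 - d*t)/(1 - c*t)) ^ p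
        = ((1 - d*t)/(1 - c*t)) ^ (p-1) * ((1 - d*t)/(1 - c*t)) := by
      rw [← Real.rpow_add_one hr.ne' (p-1)]
      congr 1
      ring
    have hrp1 : 0 < ((1 - d*t)/(1 - c*t)) ^ (p-1) := Real.rpow_pos_of_pos hr _
    have key : p * ((-d * (1 - c*t) - (1 - d*t) * -c) / (1 - c*t)^2) * ((1 - p*c*t)/(1 - p*d*t))
        + ((1 - d*t)/(1 - c*t)) * ((-(p*c) * (1 - p*d*t) - (1 - p*c*t) * -(p*d)) / (1 - p*d*t)^2)
        < 0 := by
      have heq : p * ((-d * (1 - c*t) - (1 - d*t) * -c) / (1 - c*t)^2) * ((1 - p*c*t)/(1 - p*d*t))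
          + ((1 - d*t)/(1 - c*t)) * ((-(p*c) * (1 - p*d*t) - (1 - p*c*t) * -(p*d)) / (1 - p*d*t)^2)
          = (p * ((p-1) * t * (d^2*((1-c*t)*(1-p*c*t)) - c^2*((1-d*t)*(1-p*d*t)))))
            / ((1-c*t)^2 * (1-p*d*t)^2) := by
        field_simp
        ring
      rw [heq]
      apply div_neg_of_neg_of_pos _ (by positivity)
      have hvu : 1 - c*t < 1 - d*t := by nlinarith [mul_pos (sub_pos.mpr hdc) ht0]
      have hw12 : 1 - p*c*t < 1 - p*d*t := by
        nlinarith [mul_pos (mul_pos hp0 (sub_pos.mpr hdc)) ht0]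
      have h3 : (1-c*t)*(1-p*c*t) < (1-d*t)*(1-p*d*t) :=
        calc (1-c*t)*(1-p*c*t) < (1-d*t)*(1-p*c*t) := by
              exact mul_lt_mul_of_pos_right hvu hw1
          _ < (1-d*t)*(1-p*d*t) := mul_lt_mul_of_pos_left hw12 hu
      have h2 : d^2 ≤ c^2 := by nlinarith
      have h4 : d^2*((1-c*t)*(1-p*c*t)) ≤ c^2*((1-c*t)*(1-p*c*t)) :=
        mul_le_mul_of_nonneg_right h2 (by positivity)
      have h5 : c^2*((1-c*t)*(1-p*c*t)) < c^2*((1-d*t)*(1-p*d*t)) :=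
        mul_lt_mul_of_pos_left h3 (by positivity)
      have hX : d^2*((1-c*t)*(1-p*c*t)) - c^2*((1-d*t)*(1-p*d*t)) < 0 := by linarith
      have := mul_neg_of_pos_of_neg (mul_pos hp1' ht0) hX
      nlinarith
    calc p * ((1 - d*t)/(1 - c*t)) ^ (p-1)
          * ((-d * (1 - c*t) - (1 - d*t) * -c) / (1 - c*t)^2) * ((1 - p*c*t)/(1 - p*d*t))
        + ((1 - d*t)/(1 - c*t)) ^ p
          * ((-(p*c) * (1 - p*d*t) - (1 - p*c*t) * -(p*d)) / (1 - p*d*t)^2)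
        = ((1 - d*t)/(1 - c*t)) ^ (p-1) *
          (p * ((-d * (1 - c*t) - (1 - d*t) * -c) / (1 - c*t)^2) * ((1 - p*c*t)/(1 - p*d*t))
          + ((1 - d*t)/(1 - c*t)) * ((-(p*c) * (1 - p*d*t) - (1 - p*c*t) * -(p*d)) / (1 - p*d*t)^2)) := by
          rw [hre]; ring
      _ < 0 := mul_neg_of_pos_of_neg hrp1 key

lemma gfun_zero (p c d : ℝ) : gfun p c d 0 = 1 := by
  simp [gfun, Real.one_rpow]

lemma gfun_end (p c d : ℝ) (hpc : p * c ≠ 0) : gfun p c d (1/(p*c)) = 0 := by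
  unfold gfun
  rw [show (1 : ℝ) - p*c*(1/(p*c)) = 0 by rw [mul_one_div, div_self hpc, sub_self], zero_div, mul_zero]

/-- For 1 < p < ∞ with q = p/(p-1), m < M and x₃ ∈ (m, M], the function
s(a) = |(a - q(M-x₃)|a|^p)/(a - q(M-m)|a|^p)|^p · (a - pq(M-m)|a|^p)/(a - pq(M-x₃)|a|^p)
is strictly decreasing from 1 to 0 on (0, (1/(pq(M-m)))^{q-1}); hence for each
σ ∈ (0,1) the equation s(a) = σ has a unique solution there. -/
theorem stmt18 (p q m M x₃ : ℝ) (hp : 1 < p) (hq : q = p/(p - 1))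
    (hmM : m < M) (hx₃m : m < x₃) (hx₃M : x₃ ≤ M)
    (s : ℝ → ℝ)
    (hs : ∀ a : ℝ, s a =
      |(a - q*(M - x₃)*|a|^p) / (a - q*(M - m)*|a|^p)|^p *
      ((a - p*q*(M - m)*|a|^p) / (a - p*q*(M - x₃)*|a|^p))) :
    StrictAntiOn s (Set.Ioo 0 ((1/(p*q*(M - m)))^(q - 1))) ∧
    Tendsto s (nhdsWithin 0 (Set.Ioi 0)) (nhds 1) ∧
    Tendsto s (nhdsWithin ((1/(p*q*(M - m)))^(q - 1))
      (Set.Iio ((1/(p*q*(M - m)))^(q - 1)))) (nhds 0) ∧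
    ∀ σ ∈ Set.Ioo (0:ℝ) 1,
      ∃! a : ℝ, a ∈ Set.Ioo 0 ((1/(p*q*(M - m)))^(q - 1)) ∧ s a = σ := by
  have hp0 : (0:ℝ) < p := by linarith
  have hp1' : 0 < p - 1 := sub_pos.mpr hp
  have hq0 : 0 < q := by rw [hq]; positivity
  have hqm : (q - 1) * (p - 1) = 1 := by
    rw [hq]; field_simp; ring
  set c := q * (M - m) with hc_def
  set d := q * (M - x₃) with hd_def
  have hc : 0 < c := mul_pos hq0 (sub_pos.mpr hmM)
  have hd0 : 0 ≤ d := mul_nonneg hq0.le (sub_nonneg.mpr hx₃M)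
  have hdc : d < c := by
    rw [hc_def, hd_def]
    exact mul_lt_mul_of_pos_left (by linarith) hq0
  have hpc : 0 < p * c := by positivity
  set A := (1/(p*q*(M - m)))^(q - 1) with hA_def
  have hbb : 1/(p*q*(M - m)) = 1/(p*c) := by rw [hc_def]; ring
  have hAeq : A = (1/(p*c))^(q-1) := by rw [hA_def, hbb]
  have hA : 0 < A := by
    rw [hAeq]; exact Real.rpow_pos_of_pos (by positivity) _
  have hApow : A ^ (p-1) = 1/(p*c) := by
    rw [hAeq, ← Real.rpow_mul (by positivity : (0:ℝ) ≤ 1/(p*c)), hqm, Real.rpow_one]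
  -- s a = gfun (a^(p-1)) for a > 0
  have hsg : ∀ a : ℝ, 0 < a → s a = gfun p c d (a ^ (p-1)) := by
    intro a ha
    have hap : a * a ^ (p-1) = a ^ p := by
      rw [Real.rpow_sub ha, Real.rpow_one, mul_comm, div_mul_cancel₀ _ ha.ne']
    rw [hs, abs_of_pos ha, ← hap]
    have e1 : a - q*(M - x₃)*(a * a^(p-1)) = a * (1 - d*(a^(p-1))) := by rw [hd_def]; ring
    have e2 : a - q*(M - m)*(a * a^(p-1)) = a * (1 - c*(a^(p-1))) := by rw [hc_def]; ring
    have e3 : a - p*q*(M - m)*(a * a^(p-1)) = a * (1 - p*c*(a^(p-1))) := by rw [hc_def]; ring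
    have e4 : a - p*q*(M - x₃)*(a * a^(p-1)) = a * (1 - p*d*(a^(p-1))) := by rw [hd_def]; ring
    rw [e1, e2, e3, e4, mul_div_mul_left _ _ ha.ne', mul_div_mul_left _ _ ha.ne']
    rfl
  have hganti := gfun_anti p c d hp hc hd0 hdc
  -- membership of a^(p-1)
  have hmem : ∀ a ∈ Set.Ioo (0:ℝ) A, a^(p-1) ∈ Set.Ioo 0 (1/(p*c)) := by
    intro a ha
    refine ⟨Real.rpow_pos_of_pos ha.1 _, ?_⟩
    calc a^(p-1) < A^(p-1) := Real.rpow_lt_rpow ha.1.le ha.2 hp1'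
      _ = 1/(p*c) := hApow
  have hanti : StrictAntiOn s (Set.Ioo 0 A) := by
    intro a₁ h₁ a₂ h₂ h12
    rw [hsg a₁ h₁.1, hsg a₂ h₂.1]
    exact hganti (hmem _ h₁) (hmem _ h₂) (Real.rpow_lt_rpow h₁.1.le h12 hp1')
  -- tendsto at 0+
  have hT0 : Tendsto (fun a : ℝ => a ^ (p-1)) (𝓝[>] (0:ℝ)) (𝓝 0) := by
    have h := (Real.continuousAt_rpow_const 0 (p-1) (Or.inr hp1'.le)).tendsto.mono_left
      (nhdsWithin_le_nhds (s := Set.Ioi (0:ℝ)))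
    simpa [Real.zero_rpow hp1'.ne'] using h
  have htend0 : Tendsto s (𝓝[>] (0:ℝ)) (𝓝 1) := by
    have hg0 : ContinuousAt (gfun p c d) 0 :=
      gfun_contAt p c d 0 hp0 (by norm_num) (by norm_num)
    have comp : Tendsto (fun a : ℝ => gfun p c d (a^(p-1))) (𝓝[>] (0:ℝ)) (𝓝 1) := by
      have hcomp := hg0.tendsto.comp hT0
      rw [gfun_zero p c d] at hcomp
      exact hcomp
    have hev : (fun a : ℝ => gfun p c d (a^(p-1))) =ᶠ[𝓝[>] (0:ℝ)] s := by
      filter_upwards [self_mem_nhdsWithin] with a ha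
      exact (hsg a ha).symm
    exact comp.congr' hev
  -- tendsto at A-
  have hvA : 1 - c*(1/(p*c)) ≠ 0 := by
    have : c*(1/(p*c)) = 1/p := by field_simp
    rw [this]
    have : 1/p < 1 := by rw [div_lt_one hp0]; exact hp
    linarith
  have hw2A : 1 - p*d*(1/(p*c)) ≠ 0 := by
    have : p*d*(1/(p*c)) = d/c := by field_simp
    rw [this]
    have : d/c < 1 := (div_lt_one hc).mpr hdc
    linarith
  have htendA : Tendsto s (𝓝[<] A) (𝓝 0) := by
    have hTA : Tendsto (fun a : ℝ => a^(p-1)) (𝓝[<] A) (𝓝 (1/(p*c))) := by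
      have h := (Real.continuousAt_rpow_const A (p-1) (Or.inl hA.ne')).tendsto.mono_left
        (nhdsWithin_le_nhds (s := Set.Iio A))
      rwa [hApow] at h
    have hgA : ContinuousAt (gfun p c d) (1/(p*c)) := gfun_contAt p c d _ hp0 hvA hw2A
    have comp : Tendsto (fun a : ℝ => gfun p c d (a^(p-1))) (𝓝[<] A) (𝓝 0) := by
      have hcomp := hgA.tendsto.comp hTA
      rw [gfun_end p c d hpc.ne'] at hcomp
      exact hcomp
    have hev : (fun a : ℝ => gfun p c d (a^(p-1))) =ᶠ[𝓝[<] A] s := by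
      filter_upwards [mem_nhdsWithin_of_mem_nhds (lt_mem_nhds hA)] with a ha
      exact (hsg a ha).symm
    exact comp.congr' hev
  refine ⟨hanti, htend0, htendA, ?_⟩
  -- continuity of s on Ioo 0 A
  have hscont : ContinuousOn s (Set.Ioo 0 A) := by
    intro a ha
    obtain ⟨hw1, hv, hu, hw2⟩ := pos_facts p c d (a^(p-1)) hp hc hd0 hdc
      (hmem a ha).1 (hmem a ha).2
    have h1 : ContinuousAt (fun x : ℝ => gfun p c d (x^(p-1))) a :=
      ContinuousAt.comp (x := a) (g := gfun p c d) (f := fun x : ℝ => x^(p-1))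
        (gfun_contAt p c d _ hp0 hv.ne' hw2.ne')
        (Real.continuousAt_rpow_const a (p-1) (Or.inl ha.1.ne'))
    have h2 : (fun x : ℝ => gfun p c d (x^(p-1))) =ᶠ[𝓝 a] s := by
      filter_upwards [lt_mem_nhds ha.1] with x hx
      exact (hsg x hx).symm
    exact (h1.congr h2).continuousWithinAt
  rintro σ ⟨hσ0, hσ1⟩
  have h1 : ∀ᶠ a in 𝓝[>] (0:ℝ), σ < s a := htend0.eventually (eventually_gt_nhds hσ1)
  have h2 : ∀ᶠ a in 𝓝[<] A, s a < σ := htendA.eventually (eventually_lt_nhds hσ0)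
  have hmem1 : ∀ᶠ a in 𝓝[>] (0:ℝ), a ∈ Set.Ioo 0 A := by
    filter_upwards [self_mem_nhdsWithin,
      mem_nhdsWithin_of_mem_nhds (gt_mem_nhds hA)] with a ha hb
    exact ⟨ha, hb⟩
  have hmem2 : ∀ᶠ a in 𝓝[<] A, a ∈ Set.Ioo 0 A := by
    filter_upwards [self_mem_nhdsWithin,
      mem_nhdsWithin_of_mem_nhds (lt_mem_nhds hA)] with a ha hb
    exact ⟨hb, ha⟩
  obtain ⟨a₁, ha₁σ, ha₁⟩ := (h1.and hmem1).exists
  obtain ⟨a₂, ha₂σ, ha₂⟩ := (h2.and hmem2).exists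
  have h12 : a₁ < a₂ := by
    by_contra h
    push_neg at h
    rcases eq_or_lt_of_le h with rfl | hlt
    · linarith
    · have := hanti ha₂ ha₁ hlt
      linarith
  have hsub : Set.Icc a₁ a₂ ⊆ Set.Ioo 0 A := fun x hx =>
    ⟨lt_of_lt_of_le ha₁.1 hx.1, lt_of_le_of_lt hx.2 ha₂.2⟩
  have hivt := intermediate_value_Icc' h12.le (hscont.mono hsub)
  obtain ⟨a, haI, hsa⟩ := hivt ⟨ha₂σ.le, ha₁σ.le⟩
  refine ⟨a, ⟨hsub haI, hsa⟩, ?_⟩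
  rintro b ⟨hb, hsb⟩
  exact hanti.injOn hb (hsub haI) (hsb.trans hsa.symm)
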